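/- Let v ≥ 1 and let f : ℝ^v → ℝ^v be continuously differentiable. Assume that for every choice of points χ₁, …, χ_v ∈ ℝ^v, the v×v matrix whose i-th row is the gradient of the i-th component of f evaluated at χ_i is invertible. Then f is injective on all of ℝ^v. -/

import Mathlib

/-- If `f : ℝ^v → ℝ^v` is C¹ and every "mixed-point Jacobian" (the matrix whose
`i`-th row is the gradient of `fᵢ` evaluated at its own point `χ i`) is invertible,
then `f` is injective on all of `ℝ^v`. -/
theorem injective_of_mixed_jacobian_invertible
    (v : ℕ) (hv : 1 ≤ v) (f : (Fin v → ℝ) → Fin v → ℝ)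
    (hf : ContDiff ℝ 1 f)
    (hM : ∀ χ : Fin v → (Fin v → ℝ),
      IsUnit (Matrix.of fun i j => fderiv ℝ f (χ i) (Pi.single j 1) i)) :
    Function.Injective f := by
  intro a b hab
  by_contra hne
  set d : Fin v → ℝ := b - a with hd
  have hdne : d ≠ 0 := sub_ne_zero.2 (Ne.symm (fun h => hne h))
  have hdiff := hf.differentiable one_ne_zero
  -- for each i, MVT gives a point χ i with fderiv f (χ i) d i = 0
  have key : ∀ i : Fin v, ∃ χ : Fin v → ℝ, fderiv ℝ f χ d i = 0 := by
    intro i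
    have hderiv : ∀ t : ℝ, HasDerivAt (fun t : ℝ => f (a + t • d) i)
        (fderiv ℝ f (a + t • d) d i) t := by
      intro t
      have h1 : HasDerivAt (fun t : ℝ => a + t • d) d t := by
        simpa using ((hasDerivAt_id t).smul_const d).const_add a
      have h2 : HasDerivAt (fun t : ℝ => f (a + t • d))
          (fderiv ℝ f (a + t • d) d) t :=
        (hdiff (a + t • d)).hasFDerivAt.comp_hasDerivAt t h1
      exact (hasDerivAt_pi.1 h2) i
    have hcont : ContinuousOn (fun t : ℝ => f (a + t • d) i) (Set.Icc 0 1) :=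
      fun t _ => (hderiv t).continuousAt.continuousWithinAt
    obtain ⟨c, _, hc⟩ := exists_hasDerivAt_eq_slope (fun t : ℝ => f (a + t • d) i)
      (fun t => fderiv ℝ f (a + t • d) d i) one_pos hcont
      (fun t _ => hderiv t)
    refine ⟨a + c • d, ?_⟩
    rw [hc]
    have h1 : a + (1 : ℝ) • d = b := by simp [hd]
    have h0 : a + (0 : ℝ) • d = a := by simp
    rw [h1, h0, hab]
    simp
  choose χ hχ using key
  have hMu := hM χ
  set M : Matrix (Fin v) (Fin v) ℝ :=
    Matrix.of fun i j => fderiv ℝ f (χ i) (Pi.single j 1) i with hMdef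
  have hmul : M.mulVec d = 0 := by
    funext i
    have hsum : d = ∑ j, d j • (Pi.single j 1 : Fin v → ℝ) := by
      funext k
      simp [Finset.sum_apply, Pi.single_apply]
    have : fderiv ℝ f (χ i) d = ∑ j, d j • fderiv ℝ f (χ i) ((Pi.single j 1 : Fin v → ℝ)) := by
      conv_lhs => rw [hsum]
      simp [map_sum]
    calc M.mulVec d i = ∑ j, M i j * d j := rfl
      _ = ∑ j, d j * fderiv ℝ f (χ i) (Pi.single j 1) i := by
          simp [hMdef, mul_comm]
      _ = fderiv ℝ f (χ i) d i := by
          rw [this]; simp [Finset.sum_apply]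
      _ = 0 := hχ i
  have hinj := Matrix.mulVec_injective_iff_isUnit.2 hMu
  have : d = 0 := by
    apply hinj
    rw [hmul]
    simp [Matrix.mulVec_zero]
  exact hdne this
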